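/- Let 𝒢 be a class of graphs closed under taking minors that is not the class of all graphs, and let r be the maximum chromatic number of a member of 𝒢. Then every graph G ∈ 𝒢 of maximum degree Δ has strong chromatic index at most r(Δ+1). -/

import Mathlib

/-- Two edges are at distance at most one: they share a vertex or
an endpoint of one is adjacent to an endpoint of the other. -/
def edgeNear {V : Type} (G : SimpleGraph V) (e f : Sym2 V) : Prop :=
  ∃ a ∈ e, ∃ b ∈ f, a = b ∨ G.Adj a b

/-- A set of edges is an induced matching of `G`. -/
def IsInducedMatching {V : Type} (G : SimpleGraph V) (M : Set (Sym2 V)) : Prop :=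
  M ⊆ G.edgeSet ∧
    ∀ e ∈ M, ∀ f ∈ M, e ≠ f → ∀ a ∈ e, ∀ b ∈ f, a ≠ b ∧ ¬ G.Adj a b

/-- An edge coloring is strong if every color class is an induced matching. -/
def IsStrongEdgeColoring {V : Type} {α : Type} (G : SimpleGraph V) (c : Sym2 V → α) : Prop :=
  ∀ k : α, IsInducedMatching G {e | e ∈ G.edgeSet ∧ c e = k}

/-- The strong chromatic index: least number of colors in a strong edge coloring. -/
noncomputable def strongChromaticIndex {V : Type} (G : SimpleGraph V) : ℕ :=
  sInf {n : ℕ | ∃ c : Sym2 V → Fin n, IsStrongEdgeColoring G c}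

/-- `G` is `k`-degenerate: every (induced) subgraph has a vertex of degree at most `k`. -/
def Degenerate {V : Type} (G : SimpleGraph V) (k : ℕ) : Prop :=
  ∀ s : Set V, s.Nonempty → ∃ v ∈ s, (G.neighborSet v ∩ s).ncard ≤ k

/-- A vertex is nice: it has a neighbor of degree at most `k` and
at most `k` neighbors of degree strictly greater than `k`. -/
def IsNice {V : Type} (G : SimpleGraph V) (k : ℕ) (v : V) : Prop :=
  (∃ w, G.Adj v w ∧ (G.neighborSet w).ncard ≤ k) ∧
    {w | G.Adj v w ∧ k < (G.neighborSet w).ncard}.ncard ≤ k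

/-- A graph is chordless if every cycle is induced: any edge joining two
vertices of a cycle is an edge of the cycle. -/
def Chordless {V : Type} (G : SimpleGraph V) : Prop :=
  ∀ (v : V) (c : G.Walk v v), c.IsCycle →
    ∀ a ∈ c.support, ∀ b ∈ c.support, G.Adj a b → s(a, b) ∈ c.edges

/-- `G` has treewidth at most `k`, via tree decompositions. -/
def TreewidthAtMost {V : Type} (G : SimpleGraph V) (k : ℕ) : Prop :=
  ∃ (ι : Type) (T : SimpleGraph ι) (B : ι → Finset V),
    T.Connected ∧ T.IsAcyclic ∧
    (∀ v : V, ∃ i, v ∈ B i) ∧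
    (∀ ⦃u v : V⦄, G.Adj u v → ∃ i, u ∈ B i ∧ v ∈ B i) ∧
    (∀ v : V, (T.induce {i | v ∈ B i}).Connected) ∧
    (∀ i, (B i).card ≤ k + 1)

/-- `H` is a minor of `G`, via branch sets. -/
def IsMinor {W V : Type} (H : SimpleGraph W) (G : SimpleGraph V) : Prop :=
  ∃ φ : W → Set V,
    (∀ w, (φ w).Nonempty) ∧
    (Pairwise fun a b => Disjoint (φ a) (φ b)) ∧
    (∀ w, (G.induce (φ w)).Connected) ∧
    (∀ a b, H.Adj a b → ∃ x ∈ φ a, ∃ y ∈ φ b, G.Adj x y)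

/-- A set of edges forming a matching (pairwise non-incident edges of `G`). -/
def IsMatchingSet {V : Type} (G : SimpleGraph V) (M : Set (Sym2 V)) : Prop :=
  M ⊆ G.edgeSet ∧ ∀ e ∈ M, ∀ f ∈ M, e ≠ f → ∀ a ∈ e, a ∉ f

section VizDev
open SimpleGraph
namespace Viz
variable {V : Type} {k : ℕ}

/-- Properness of a partial edge coloring. -/
def Proper (c : Sym2 V → Option (Fin k)) : Prop :=
  ∀ ⦃a : V⦄ ⦃e f : Sym2 V⦄, a ∈ e → a ∈ f → e ≠ f → (c e).isSome → c e ≠ c f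

/-- Color `γ` is missing at `v`. -/
def Missing (G : SimpleGraph V) (c : Sym2 V → Option (Fin k)) (v : V) (γ : Fin k) : Prop :=
  ∀ z, G.Adj v z → c s(v, z) ≠ some γ

open Classical in
noncomputable def recolor (c : Sym2 V → Option (Fin k)) (e₀ : Sym2 V) (v : Option (Fin k)) :
    Sym2 V → Option (Fin k) := fun e => if e = e₀ then v else c e

@[simp] lemma recolor_same (c : Sym2 V → Option (Fin k)) (e₀ v) : recolor c e₀ v e₀ = v := by
  simp [recolor]

lemma recolor_ne (c : Sym2 V → Option (Fin k)) (e₀ v) {e} (h : e ≠ e₀) :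
    recolor c e₀ v e = c e := by simp [recolor, h]

lemma proper_uncolor {c : Sym2 V → Option (Fin k)} (hc : Proper c) (e₀ : Sym2 V) :
    Proper (recolor c e₀ none) := by
  intro a e f hae haf hef hs
  by_cases he : e = e₀
  · simp [he, recolor] at hs
  · rw [recolor_ne _ _ _ he] at hs ⊢
    by_cases hf : f = e₀
    · subst hf
      simp only [recolor_same]
      intro h; rw [h] at hs; simp at hs
    · rw [recolor_ne _ _ _ hf]
      exact hc hae haf hef hs

lemma proper_color {G : SimpleGraph V} {c : Sym2 V → Option (Fin k)} (hc : Proper c)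
    (hdom : ∀ e, (c e).isSome → e ∈ G.edgeSet)
    {x u : V} {γ : Fin k} (hmx : Missing G c x γ) (hmu : Missing G c u γ)
    (h0 : c s(x, u) = none) :
    Proper (recolor c s(x, u) (some γ)) := by
  intro a e f hae haf hef hs
  have key : ∀ g : Sym2 V, a ∈ g → g ≠ s(x, u) → a ∈ (s(x, u) : Sym2 V) → c g ≠ some γ := by
    intro g hag hgne hmem
    intro hg
    have hgE : g ∈ G.edgeSet := hdom g (by rw [hg]; rfl)
    obtain ⟨z, rfl⟩ := Sym2.mem_iff_exists.1 hag
    have hadj : G.Adj a z := hgE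
    rcases Sym2.mem_iff.1 hmem with rfl | rfl
    · exact hmx z hadj hg
    · exact hmu z hadj hg
  by_cases he : e = s(x, u)
  · subst he
    rw [recolor_same] at hs ⊢
    have hfne : f ≠ s(x,u) := fun hf => hef (hf.symm)
    rw [recolor_ne _ _ _ hfne]
    exact fun h => key f haf hfne hae h.symm
  · rw [recolor_ne _ _ _ he] at hs ⊢
    by_cases hf : f = s(x, u)
    · subst hf
      rw [recolor_same]
      exact fun h => key e hae he haf h
    · rw [recolor_ne _ _ _ hf]
      exact hc hae haf hef hs

/-- Existence of a missing color. -/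
lemma exists_missing [Fintype V] (G : SimpleGraph V) (c : Sym2 V → Option (Fin k))
    (v : V) (hv : (G.neighborSet v).ncard < k) : ∃ γ, Missing G c v γ := by
  classical
  by_contra h
  push_neg at h
  simp only [Missing, not_forall] at h
  -- for each γ there is z with G.Adj v z ∧ c s(v,z) = some γ
  have h' : ∀ γ : Fin k, ∃ x, G.Adj v x ∧ c s(v, x) = some γ := by
    intro γ
    obtain ⟨x, hx1, hx2⟩ := h γ
    exact ⟨x, hx1, not_not.1 hx2⟩
  choose z hz hcz using h'
  have hinj : Function.Injective z := by
    intro γ₁ γ₂ hzz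
    have := (hcz γ₁).symm.trans (hzz ▸ hcz γ₂)
    exact Option.some_injective _ this
  have : (Set.range z) ⊆ G.neighborSet v := by
    rintro _ ⟨γ, rfl⟩; exact hz γ
  have hk : k ≤ (G.neighborSet v).ncard := by
    calc k = (Set.range z).ncard := by
            rw [← Set.image_univ, Set.ncard_image_of_injective _ hinj, Set.ncard_univ,
              Nat.card_eq_fintype_card, Fintype.card_fin]
         _ ≤ (G.neighborSet v).ncard := Set.ncard_le_ncard this (Set.toFinite _)
  omega



-- ncard helpers
lemma two_le_ncard {s : Set V} {a b : V} (ha : a ∈ s) (hb : b ∈ s) (hab : a ≠ b)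
    (hs : s.Finite) : 2 ≤ s.ncard := by
  have h1 : ({a, b} : Set V) ⊆ s := by rintro x (rfl | rfl) <;> assumption
  have := Set.ncard_le_ncard h1 hs
  rwa [Set.ncard_pair hab] at this

lemma mem_pair_of_ncard {s : Set V} {a b z : V} (ha : a ∈ s) (hb : b ∈ s) (hz : z ∈ s)
    (hab : a ≠ b) (hs : s.Finite) (h2 : s.ncard ≤ 2) : z = a ∨ z = b := by
  by_contra h
  push_neg at h
  have h1 : ({z, a, b} : Set V) ⊆ s := by rintro x (rfl | rfl | rfl) <;> assumption
  have h3 : ({z, a, b} : Set V).ncard = 3 := by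
    rw [Set.ncard_insert_of_notMem (by simp [h.1, h.2]) (Set.toFinite _), Set.ncard_pair hab]
  have := Set.ncard_le_ncard h1 hs
  omega

lemma eq_of_ncard_le_one {s : Set V} {a b : V} (ha : a ∈ s) (hb : b ∈ s)
    (hs : s.Finite) (h1 : s.ncard ≤ 1) : a = b := by
  by_contra hab
  have := two_le_ncard ha hb hab hs
  omega

section NoThree
variable {H : SimpleGraph V}

/-- An interior vertex of a path has two distinct neighbors on the path. -/
lemma interior_two : ∀ {x u : V} (P : H.Walk x u), P.IsPath → ∀ v ∈ P.support, v ≠ x → v ≠ u →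
    ∃ a b, a ≠ b ∧ H.Adj v a ∧ H.Adj v b ∧ a ∈ P.support ∧ b ∈ P.support := by
  intro x u P
  induction P with
  | nil => intro _ v hv hvx _; simp at hv; exact absurd hv hvx
  | @cons x y u hadj q ih =>
    intro hP v hv hvx hvu
    rw [Walk.support_cons, List.mem_cons] at hv
    rcases hv with rfl | hv
    · exact absurd rfl hvx
    by_cases hvy : v = y
    · subst hvy
      cases q with
      | nil => exact absurd rfl hvu
      | @cons y z u h2 q2 =>
        refine ⟨x, z, ?_, hadj.symm, h2, ?_, ?_⟩
        · have hx : x ∉ (Walk.cons h2 q2).support := by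
            have := hP.support_nodup
            rw [Walk.support_cons] at this
            exact (List.nodup_cons.1 this).1
          intro hxz
          apply hx
          rw [hxz, Walk.support_cons]
          exact List.mem_cons_of_mem _ q2.start_mem_support
        · rw [Walk.support_cons]; exact List.mem_cons_self
        · rw [Walk.support_cons, Walk.support_cons]
          exact List.mem_cons_of_mem _ (List.mem_cons_of_mem _ q2.start_mem_support)
    · obtain ⟨a, b, hab, h1, h2, h3, h4⟩ := ih hP.of_cons v hv hvy hvu
      exact ⟨a, b, hab, h1, h2, by rw [Walk.support_cons]; exact List.mem_cons_of_mem _ h3,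
        by rw [Walk.support_cons]; exact List.mem_cons_of_mem _ h4⟩

/-- neighbors of the start of a path with degree ≤ 1 stay on the path. -/
lemma head_nbr [Fintype V] {x u : V} (P : H.Walk x u) (hxu : x ≠ u)
    (dx : (H.neighborSet x).ncard ≤ 1) {z : V} (hz : H.Adj x z) : z ∈ P.support := by
  cases P with
  | nil => exact absurd rfl hxu
  | @cons x y u h q =>
    have : z = y := eq_of_ncard_le_one hz h (Set.toFinite _) dx
    subst this
    rw [Walk.support_cons]
    exact List.mem_cons_of_mem _ q.start_mem_support

lemma reach_closed {S : Set V} (hcl : ∀ v ∈ S, ∀ z, H.Adj v z → z ∈ S) :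
    ∀ {a b : V}, H.Walk a b → a ∈ S → b ∈ S := by
  intro a b q
  induction q with
  | nil => exact id
  | cons h q ih => intro ha; exact ih (hcl _ ha _ h)

lemma no_three [Fintype V] (hdeg2 : ∀ v, (H.neighborSet v).ncard ≤ 2)
    {x u w : V} (hxu : x ≠ u) (hxw : x ≠ w) (huw : u ≠ w)
    (dx : (H.neighborSet x).ncard ≤ 1) (du : (H.neighborSet u).ncard ≤ 1)
    (dw : (H.neighborSet w).ncard ≤ 1) (hru : H.Reachable x u) : ¬ H.Reachable x w := by
  classical
  obtain ⟨P0⟩ := hru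
  obtain ⟨P, hP⟩ := P0.toPath
  intro hrw
  set S : Set V := {v | v ∈ P.support} with hS
  have hclosed : ∀ v ∈ S, ∀ z, H.Adj v z → z ∈ S := by
    intro v hv z hz
    by_cases hvx : v = x
    · subst hvx; exact head_nbr P hxu dx hz
    by_cases hvu : v = u
    · subst hvu
      have : z ∈ P.reverse.support := head_nbr P.reverse (Ne.symm hxu) du hz
      rwa [Walk.support_reverse, List.mem_reverse] at this
    · obtain ⟨a, b, hab, h1, h2, h3, h4⟩ := interior_two P hP v hv hvx hvu
      rcases mem_pair_of_ncard (s := H.neighborSet v) h1 h2 hz hab (Set.toFinite _) (hdeg2 v) with rfl | rfl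
      · exact h3
      · exact h4
  obtain ⟨Q⟩ := hrw
  have hwS : w ∈ S := reach_closed hclosed Q P.start_mem_support
  obtain ⟨a, b, hab, h1, h2, _, _⟩ := interior_two P hP w hwS (Ne.symm hxw) (Ne.symm huw)
  have := two_le_ncard (s := H.neighborSet w) h1 h2 hab (Set.toFinite _)
  omega

end NoThree

/-- the subgraph of edges colored α or β -/
def abG (c : Sym2 V → Option (Fin k)) (α β : Fin k) : SimpleGraph V where
  Adj u v := u ≠ v ∧ (c s(u, v) = some α ∨ c s(u, v) = some β)
  symm := by
    constructor
    intro u v ⟨h1, h2⟩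
    exact ⟨h1.symm, by rwa [Sym2.eq_swap]⟩
  loopless := ⟨fun v h => h.1 rfl⟩

lemma sym2_eq {a v : V} {e : Sym2 V} (hne : a ≠ v) (ha : a ∈ e) (hv : v ∈ e) : e = s(a, v) :=
  (Sym2.mem_and_mem_iff hne).1 ⟨ha, hv⟩

variable {G : SimpleGraph V} {c : Sym2 V → Option (Fin k)} {α β : Fin k}

/-- distinct edges at a vertex with the same color contradict properness -/
lemma proper_unique (hc : Proper c) {v z₁ z₂ : V} {γ : Fin k} (h1 : c s(v, z₁) = some γ)
    (h2 : c s(v, z₂) = some γ) (hd1 : v ≠ z₁) : z₁ = z₂ := by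
  by_contra hne
  have hee : (s(v, z₁) : Sym2 V) ≠ s(v, z₂) := by
    intro h
    rw [Sym2.eq_iff] at h
    rcases h with ⟨-, h'⟩ | ⟨-, h'⟩
    · exact hne h'
    · exact hd1 h'.symm
  exact hc (Sym2.mem_mk_left v z₁) (Sym2.mem_mk_left v z₂) hee (by rw [h1]; rfl)
    (by rw [h1, h2])

lemma color_class_subsingleton (hc : Proper c) (v : V) (γ : Fin k) :
    ({z | c s(v, z) = some γ} : Set V).Subsingleton := by
  intro z₁ h1 z₂ h2
  by_cases hd1 : v = z₁
  · by_cases hd2 : v = z₂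
    · exact hd1.symm.trans hd2
    · exact (proper_unique hc h2 h1 hd2).symm
  · exact proper_unique hc h1 h2 hd1

lemma abG_deg_le_two [Fintype V] (hc : Proper c) (v : V) :
    ((abG c α β).neighborSet v).ncard ≤ 2 := by
  have hsub : (abG c α β).neighborSet v ⊆
      {z | c s(v, z) = some α} ∪ {z | c s(v, z) = some β} := by
    rintro z ⟨hne, h | h⟩
    · exact Or.inl h
    · exact Or.inr h
  calc ((abG c α β).neighborSet v).ncard
      ≤ ({z | c s(v, z) = some α} ∪ {z | c s(v, z) = some β} : Set V).ncard :=
        Set.ncard_le_ncard hsub (Set.toFinite _)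
    _ ≤ ({z | c s(v, z) = some α} : Set V).ncard + ({z | c s(v, z) = some β} : Set V).ncard :=
        Set.ncard_union_le _ _
    _ ≤ 1 + 1 := Nat.add_le_add
        ((Set.ncard_le_one (Set.toFinite _)).2 (color_class_subsingleton hc v α))
        ((Set.ncard_le_one (Set.toFinite _)).2 (color_class_subsingleton hc v β))
    _ = 2 := rfl

lemma abG_deg_le_one [Fintype V] (hc : Proper c) {v : V}
    (hm : ∀ z, c s(v, z) ≠ some β) : ((abG c α β).neighborSet v).ncard ≤ 1 := by
  have hsub : (abG c α β).neighborSet v ⊆ {z | c s(v, z) = some α} := by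
    rintro z ⟨hne, h | h⟩
    · exact h
    · exact absurd h (hm z)
  exact le_trans (Set.ncard_le_ncard hsub (Set.toFinite _))
    ((Set.ncard_le_one (Set.toFinite _)).2 (color_class_subsingleton hc v α))

lemma abG_deg_le_one_left [Fintype V] (hc : Proper c) {v : V}
    (hm : ∀ z, c s(v, z) ≠ some α) : ((abG c α β).neighborSet v).ncard ≤ 1 := by
  have hsub : (abG c α β).neighborSet v ⊆ {z | c s(v, z) = some β} := by
    rintro z ⟨hne, h | h⟩
    · exact absurd h (hm z)
    · exact h
  exact le_trans (Set.ncard_le_ncard hsub (Set.toFinite _))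
    ((Set.ncard_le_one (Set.toFinite _)).2 (color_class_subsingleton hc v β))

open Classical in
/-- Kempe swap of colors α and β on the component of `x`. -/
noncomputable def swap (c : Sym2 V → Option (Fin k)) (α β : Fin k) (x : V) :
    Sym2 V → Option (Fin k) :=
  fun e => if ∃ v ∈ e, (abG c α β).Reachable x v then
    (c e).map (fun γ => if γ = α then β else if γ = β then α else γ) else c e

lemma tog_inj (hab : α ≠ β) :
    Function.Injective (fun γ : Fin k => if γ = α then β else if γ = β then α else γ) := by
  intro γ₁ γ₂ h
  simp only at h
  split_ifs at h with h1 h2 h3 h4 h5 <;>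
    first
      | (subst_vars; rfl)
      | (exfalso; subst_vars; simp_all)
      | (subst_vars; exact h.symm)
      | (subst_vars; exact h)
      | exact h

lemma swap_isSome (x : V) (e : Sym2 V) : ((swap c α β x) e).isSome = (c e).isSome := by
  unfold swap
  split_ifs
  · cases c e <;> simp
  · rfl

/-- An edge colored α or β whose one endpoint is reachable has both endpoints reachable. -/
lemma both_reachable (hdom : ∀ e, (c e).isSome → e ∈ G.edgeSet)
    {e : Sym2 V} (hcol : c e = some α ∨ c e = some β) {v : V} (hv : v ∈ e)
    (hr : (abG c α β).Reachable x v) : ∀ w ∈ e, (abG c α β).Reachable x w := by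
  intro w hw
  by_cases hvw : v = w
  · exact hvw ▸ hr
  · have he : e = s(v, w) := sym2_eq hvw hv hw
    have hadj : (abG c α β).Adj v w := ⟨hvw, by rw [← he]; exact hcol⟩
    exact hr.trans hadj.reachable

/-- at a vertex not reachable from x, swap changes nothing on incident edges -/
lemma swap_eq_at_unreachable (hdom : ∀ e, (c e).isSome → e ∈ G.edgeSet) {x v : V}
    (hv : ¬ (abG c α β).Reachable x v) (z : V) : swap c α β x s(v, z) = c s(v, z) := by
  classical
  unfold swap
  split_ifs with h
  · obtain ⟨w, hw, hrw⟩ := h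
    cases hce : c s(v, z) with
    | none => simp
    | some γ =>
      by_cases hγ : γ = α ∨ γ = β
      · exfalso
        apply hv
        exact both_reachable (α := α) (β := β) hdom (by rcases hγ with rfl | rfl
                                                        · exact Or.inl hce
                                                        · exact Or.inr hce) hw hrw v
          (Sym2.mem_mk_left v z)
      · push_neg at hγ
        simp [hγ.1, hγ.2]
  · rfl

lemma swap_missing_unreachable (hdom : ∀ e, (c e).isSome → e ∈ G.edgeSet) {x v : V}
    (hv : ¬ (abG c α β).Reachable x v) {γ : Fin k} (hm : Missing G c v γ) :
    Missing G (swap c α β x) v γ := by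
  intro z hz
  rw [swap_eq_at_unreachable hdom hv z]
  exact hm z hz

/-- after the swap, β is missing at x (if α was missing at x). -/
lemma swap_missing_x (hab : α ≠ β) (hmx : Missing G c x α) :
    Missing G (swap c α β x) x β := by
  classical
  intro z hz
  unfold swap
  have hcond : ∃ v ∈ (s(x, z) : Sym2 V), (abG c α β).Reachable x v :=
    ⟨x, Sym2.mem_mk_left x z, Reachable.refl x⟩
  rw [if_pos hcond]
  cases hce : c s(x, z) with
  | none => simp
  | some γ =>
    simp only [Option.map_some]
    intro h
    have : (if γ = α then β else if γ = β then α else γ) = β := Option.some_injective _ h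
    split_ifs at this with h1 h2
    · subst h1; exact hmx z hz hce
    · exact hab this
    · exact h2 this

/-- swap preserves properness -/
lemma swap_proper (hab : α ≠ β) (hc : Proper c) (hdom : ∀ e, (c e).isSome → e ∈ G.edgeSet)
    (x : V) : Proper (swap c α β x) := by
  classical
  intro a e f hae haf hef hs
  rw [swap_isSome] at hs
  unfold swap
  split_ifs with he hf hf
  · -- both swapped
    intro h
    have : c e = c f := Option.map_injective (tog_inj hab) h
    exact hc hae haf hef hs this
  · -- e swapped, f not
    intro h
    -- h : (c e).map tog = c f
    cases hce : c e with
    | none => rw [hce] at hs; simp at hs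
    | some γ =>
      rw [hce] at h
      simp only [Option.map_some] at h
      by_cases hγ : γ = α ∨ γ = β
      · -- e is an αβ edge with a reachable endpoint, so a is reachable, so f is swapped
        exfalso
        apply hf
        obtain ⟨v, hv, hrv⟩ := he
        have hra : (abG c α β).Reachable x a :=
          both_reachable (α := α) (β := β) hdom
            (by rcases hγ with rfl | rfl
                · exact Or.inl hce
                · exact Or.inr hce) hv hrv a hae
        exact ⟨a, haf, hra⟩
      · push_neg at hγ
        rw [if_neg hγ.1, if_neg hγ.2] at h
        exact hc hae haf hef hs (hce.trans h)
  · -- f swapped, e not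
    intro h
    cases hcf : c f with
    | none => rw [hcf] at h; rw [h] at hs; simp at hs
    | some γ =>
      rw [hcf] at h
      simp only [Option.map_some] at h
      by_cases hγ : γ = α ∨ γ = β
      · exfalso
        apply he
        obtain ⟨v, hv, hrv⟩ := hf
        have hra : (abG c α β).Reachable x a :=
          both_reachable (α := α) (β := β) hdom
            (by rcases hγ with rfl | rfl
                · exact Or.inl hcf
                · exact Or.inr hcf) hv hrv a haf
        exact ⟨a, hae, hra⟩
      · push_neg at hγ
        rw [if_neg hγ.1, if_neg hγ.2] at h
        exact hc hae haf hef hs (h.trans hcf.symm)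
  · exact hc hae haf hef hs



/-! ### Fans and rotations -/

noncomputable def rot (c : Sym2 V → Option (Fin k)) (x : V) (f : ℕ → V) (βf : ℕ → Fin k) :
    ℕ → Sym2 V → Option (Fin k)
  | 0 => c
  | (i+1) => recolor (recolor (rot c x f βf i) s(x, f (i+1)) none) s(x, f i) (some (βf i))

section Rot
variable {x : V} {f : ℕ → V} {βf : ℕ → Fin k} {n : ℕ}

lemma edge_inj (hfx : ∀ l, l ≤ n → f l ≠ x)
    (hinj : ∀ a b, a ≤ n → b ≤ n → f a = f b → a = b)
    {a b : ℕ} (ha : a ≤ n) (hb : b ≤ n) (h : (s(x, f a) : Sym2 V) = s(x, f b)) : a = b := by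
  rw [Sym2.eq_iff] at h
  rcases h with ⟨-, h⟩ | ⟨h, -⟩
  · exact hinj a b ha hb h
  · exact absurd h.symm (hfx b hb)

lemma rot_spec (hfx : ∀ l, l ≤ n → f l ≠ x)
    (hinj : ∀ a b, a ≤ n → b ≤ n → f a = f b → a = b)
    (h0 : c s(x, f 0) = none) :
    ∀ i, i ≤ n →
      (∀ l, l < i → rot c x f βf i s(x, f l) = some (βf l)) ∧
      (rot c x f βf i s(x, f i) = none) ∧
      (∀ e, (∀ l, l ≤ i → e ≠ s(x, f l)) → rot c x f βf i e = c e) := by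
  intro i
  induction i with
  | zero => exact fun _ => ⟨fun l hl => absurd hl (Nat.not_lt_zero l), h0, fun e _ => rfl⟩
  | succ i ih =>
    intro hin
    have hi : i ≤ n := Nat.le_of_succ_le hin
    obtain ⟨ih1, ih2, ih3⟩ := ih hi
    have hne1 : (s(x, f (i+1)) : Sym2 V) ≠ s(x, f i) := fun h =>
      Nat.succ_ne_self i (edge_inj hfx hinj hin hi h)
    refine ⟨?_, ?_, ?_⟩
    · intro l hl
      rcases Nat.lt_succ_iff_lt_or_eq.1 hl with hl' | rfl
      · have hl1 : (s(x, f l) : Sym2 V) ≠ s(x, f i) := fun h =>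
          (Nat.ne_of_lt hl') (edge_inj hfx hinj (le_trans (Nat.le_of_lt hl') hi) hi h)
        have hl2 : (s(x, f l) : Sym2 V) ≠ s(x, f (i+1)) := fun h =>
          (Nat.ne_of_lt hl) (edge_inj hfx hinj (le_trans (Nat.le_of_lt hl') hi) hin h)
        show recolor _ _ _ _ = _
        rw [recolor_ne _ _ _ hl1, recolor_ne _ _ _ hl2]
        exact ih1 l hl'
      · show recolor _ _ _ _ = _
        rw [recolor_same]
    · show recolor _ _ _ _ = _
      rw [recolor_ne _ _ _ hne1, recolor_same]
    · intro e he
      show recolor _ _ _ _ = _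
      rw [recolor_ne _ _ _ (he i (Nat.le_succ i)), recolor_ne _ _ _ (he (i+1) le_rfl)]
      exact ih3 e (fun l hl => he l (le_trans hl (Nat.le_succ i)))

end Rot

/-! ### Filling in the uncolored edge -/

lemma fill [Fintype V] {G : SimpleGraph V} {x u : V} (hxu : G.Adj x u)
    {c₁ : Sym2 V → Option (Fin k)}
    (dom : ∀ e, (c₁ e).isSome ↔ e ∈ G.edgeSet ∧ e ≠ s(x, u)) (hp : Proper c₁)
    {γ : Fin k} (hmx : Missing G c₁ x γ) (hmu : Missing G c₁ u γ) :
    ∃ c' : Sym2 V → Option (Fin k), (∀ e, (c' e).isSome ↔ e ∈ G.edgeSet) ∧ Proper c' := by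
  have hdom1 : ∀ e, (c₁ e).isSome → e ∈ G.edgeSet := fun e he => ((dom e).1 he).1
  have h0 : c₁ s(x, u) = none :=
    Option.not_isSome_iff_eq_none.1 (fun hs => ((dom _).1 hs).2 rfl)
  refine ⟨recolor c₁ s(x, u) (some γ), ?_, proper_color hp hdom1 hmx hmu h0⟩
  intro e
  by_cases he : e = s(x, u)
  · subst he
    simp only [recolor_same, Option.isSome_some]
    simp [SimpleGraph.mem_edgeSet, hxu]
  · rw [recolor_ne _ _ _ he, dom e]
    exact ⟨fun h => h.1, fun h => ⟨h, he⟩⟩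

lemma kempe_extend [Fintype V] {G : SimpleGraph V} {x u : V} (hxu : G.Adj x u)
    {c₁ : Sym2 V → Option (Fin k)}
    (dom : ∀ e, (c₁ e).isSome ↔ e ∈ G.edgeSet ∧ e ≠ s(x, u)) (hp : Proper c₁)
    {α β : Fin k} (hab : α ≠ β)
    (hmx : Missing G c₁ x α) (hmu : Missing G c₁ u β)
    (hnr : ¬ (abG c₁ α β).Reachable x u) :
    ∃ c' : Sym2 V → Option (Fin k), (∀ e, (c' e).isSome ↔ e ∈ G.edgeSet) ∧ Proper c' := by
  have hdom1 : ∀ e, (c₁ e).isSome → e ∈ G.edgeSet := fun e he => ((dom e).1 he).1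
  refine fill hxu (c₁ := swap c₁ α β x) ?_ (swap_proper hab hp hdom1 x)
    (swap_missing_x hab hmx) (swap_missing_unreachable hdom1 hnr hmu)
  intro e
  rw [swap_isSome]
  exact dom e

/-! ### The extension theorem (the heart of Vizing's theorem) -/

theorem vizing_extend [Fintype V] {Δ : ℕ} {G : SimpleGraph V}
    (hdeg : ∀ v, (G.neighborSet v).ncard ≤ Δ) {x y : V} (hxy : G.Adj x y)
    {c : Sym2 V → Option (Fin (Δ+1))}
    (hdom : ∀ e, (c e).isSome ↔ e ∈ G.edgeSet ∧ e ≠ s(x, y))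
    (hc : Proper c) :
    ∃ c' : Sym2 V → Option (Fin (Δ+1)), (∀ e, (c' e).isSome ↔ e ∈ G.edgeSet) ∧ Proper c' := by
  classical
  have hdom1 : ∀ e, (c e).isSome → e ∈ G.edgeSet := fun e he => ((hdom e).1 he).1
  have hmiss : ∀ v : V, ∃ γ : Fin (Δ+1), Missing G c v γ := fun v =>
    exists_missing G c v (lt_of_le_of_lt (hdeg v) (Nat.lt_succ_self Δ))
  choose βc hβc using hmiss
  -- maximal fan
  set Fan : (ℕ → V) → ℕ → Prop := fun f n =>
    f 0 = y ∧ (∀ l, l ≤ n → G.Adj x (f l)) ∧ (∀ a b, a ≤ n → b ≤ n → f a = f b → a = b) ∧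
      (∀ l, l < n → c s(x, f (l+1)) = some (βc (f l))) with hFanDef
  set S : Set ℕ := {n | ∃ f, Fan f n} with hSdef
  have hS0 : 0 ∈ S := ⟨fun _ => y, rfl, fun l _ => hxy,
    fun a b ha hb _ => (Nat.le_zero.1 ha).trans (Nat.le_zero.1 hb).symm,
    fun l hl => absurd hl (Nat.not_lt_zero l)⟩
  have hSb : BddAbove S := by
    refine ⟨Fintype.card V, ?_⟩
    rintro n ⟨f, -, hadj, hinj, -⟩
    have : Function.Injective (fun i : Fin (n+1) => f i) := by
      intro a b hab
      exact Fin.ext (hinj a b (Nat.lt_succ_iff.1 a.2) (Nat.lt_succ_iff.1 b.2) hab)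
    have hcard := Fintype.card_le_of_injective _ this
    rw [Fintype.card_fin] at hcard
    omega
  have hmaxS : sSup S ∈ S := Nat.sSup_mem ⟨0, hS0⟩ hSb
  set n₀ := sSup S with hn₀
  obtain ⟨f, hf0, hfadj, hfinj, hfprop⟩ := hmaxS
  have hfx : ∀ l, l ≤ n₀ → f l ≠ x := fun l hl => (hfadj l hl).ne'
  have hedge : ∀ l, l ≤ n₀ → (s(x, f l) : Sym2 V) ∈ G.edgeSet := fun l hl =>
    (SimpleGraph.mem_edgeSet _).2 (hfadj l hl)
  have h0 : c s(x, f 0) = none := by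
    rw [hf0]
    exact Option.not_isSome_iff_eq_none.1 (fun hs => ((hdom _).1 hs).2 rfl)
  set R : ℕ → Sym2 V → Option (Fin (Δ+1)) := rot c x f (fun l => βc (f l)) with hR
  have hspec : ∀ i, i ≤ n₀ →
      (∀ l, l < i → R i s(x, f l) = some (βc (f l))) ∧
      (R i s(x, f i) = none) ∧
      (∀ e, (∀ l, l ≤ i → e ≠ s(x, f l)) → R i e = c e) := by
    rw [hR]
    exact rot_spec (c := c) (βf := fun l => βc (f l)) hfx hfinj h0
  -- uniqueness of colors at x in c
  have huniq : ∀ {z₁ z₂ : V} {γ : Fin (Δ+1)}, c s(x, z₁) = some γ → c s(x, z₂) = some γ →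
      z₁ = z₂ := by
    intro z₁ z₂ γ h1 h2
    have hxz : x ≠ z₁ := by
      intro h
      rw [← h] at h1
      exact SimpleGraph.irrefl G ((SimpleGraph.mem_edgeSet _).1 (hdom1 _ (by rw [h1]; rfl))) 
    exact proper_unique hc h1 h2 hxz
  -- domain of R i
  have hRdom : ∀ i, i ≤ n₀ → ∀ e, ((R i) e).isSome ↔ e ∈ G.edgeSet ∧ e ≠ s(x, f i) := by
    intro i hi e
    obtain ⟨hs1, hs2, hs3⟩ := hspec i hi
    by_cases he : ∃ l, l ≤ i ∧ e = s(x, f l)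
    · obtain ⟨l, hl, rfl⟩ := he
      rcases Nat.lt_or_ge l i with hl' | hl'
      · rw [hs1 l hl']
        simp only [Option.isSome_some, true_iff]
        exact ⟨hedge l (hl.trans hi), fun h =>
          (Nat.ne_of_lt hl') (edge_inj hfx hfinj (hl.trans hi) hi h)⟩
      · have : l = i := le_antisymm hl hl'
        subst this
        rw [hs2]
        simp
    · push_neg at he
      rw [hs3 e (fun l hl h => he l hl h)]
      rw [hdom e]
      constructor
      · rintro ⟨h1, -⟩
        refine ⟨h1, fun h => he i le_rfl h⟩
      · rintro ⟨h1, -⟩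
        refine ⟨h1, fun h => he 0 (Nat.zero_le i) (by rw [h, hf0])⟩
  -- properness of R i
  have hRproper : ∀ i, i ≤ n₀ → Proper (R i) := by
    intro i
    induction i with
    | zero => exact fun _ => hc
    | succ i ih =>
      intro hin
      have hi : i ≤ n₀ := Nat.le_of_succ_le hin
      have hilt : i < n₀ := hin
      obtain ⟨hs1, hs2, hs3⟩ := hspec i hi
      have hPi := ih hi
      set mid := recolor (R i) s(x, f (i+1)) none with hmid
      have hmid_prop : Proper mid := proper_uncolor hPi _
      have hne1 : (s(x, f i) : Sym2 V) ≠ s(x, f (i+1)) := fun h =>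
        Nat.succ_ne_self i (edge_inj hfx hfinj hi hin h).symm
      have hmid_dom : ∀ e, (mid e).isSome → e ∈ G.edgeSet := by
        intro e he
        rw [hmid] at he
        by_cases h : e = s(x, f (i+1))
        · rw [h, recolor_same] at he; simp at he
        · rw [recolor_ne _ _ _ h] at he
          exact ((hRdom i hi e).1 he).1
      have hmid0 : mid s(x, f i) = none := by
        rw [hmid, recolor_ne _ _ _ hne1, hs2]
      -- value of mid on edges avoiding x
      have hmid_avoid : ∀ a z : V, a ≠ x → z ≠ x → mid s(a, z) = c s(a, z) := by
        intro a z ha hz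
        have hmem : ∀ l, (s(a, z) : Sym2 V) ≠ s(x, f l) := by
          intro l h
          have : x ∈ (s(a, z) : Sym2 V) := by rw [h]; exact Sym2.mem_mk_left x (f l)
          rcases Sym2.mem_iff.1 this with h' | h'
          · exact ha h'.symm
          · exact hz h'.symm
        rw [hmid, recolor_ne _ _ _ (hmem (i+1))]
        exact hs3 _ (fun l _ => hmem l)
      have hmissfi : Missing G mid (f i) (βc (f i)) := by
        intro z hz
        by_cases hzx : z = x
        · subst hzx
          rw [Sym2.eq_swap, hmid0]
          simp
        · rw [hmid_avoid (f i) z (hfx i hi) hzx]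
          exact hβc (f i) z hz
      have hmissx : Missing G mid x (βc (f i)) := by
        intro z hz
        by_cases hez : ∃ l, l ≤ i+1 ∧ z = f l
        · obtain ⟨l, hl, rfl⟩ := hez
          rcases Nat.lt_or_ge l (i+1) with hl' | hl'
          · rcases Nat.lt_or_ge l i with hl2 | hl2
            · have : mid s(x, f l) = some (βc (f l)) := by
                rw [hmid, recolor_ne _ _ _ (fun h =>
                  (Nat.ne_of_lt hl') (edge_inj hfx hfinj (by omega) hin h))]
                exact hs1 l hl2
              rw [this]
              intro h
              have hb : βc (f l) = βc (f i) := Option.some_injective _ h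
              have e1 : c s(x, f (l+1)) = some (βc (f l)) := hfprop l (lt_trans hl2 hilt)
              have e2 : c s(x, f (i+1)) = some (βc (f i)) := hfprop i hilt
              rw [hb] at e1
              have := huniq e1 e2
              have := hfinj (l+1) (i+1) (Nat.succ_le_of_lt (lt_trans hl2 hilt)) hin this
              omega
            · have : l = i := le_antisymm (Nat.lt_succ_iff.1 hl') hl2
              subst this
              rw [hmid, recolor_ne _ _ _ hne1, hs2]
              simp
          · have : l = i+1 := le_antisymm hl hl'
            subst this
            rw [hmid, recolor_same]
            simp
        · push_neg at hez
          have hmem : ∀ l, l ≤ i+1 → (s(x, z) : Sym2 V) ≠ s(x, f l) := by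
            intro l hl h
            rw [Sym2.eq_iff] at h
            rcases h with ⟨-, h⟩ | ⟨h, -⟩
            · exact hez l hl h
            · exact hfx l (le_trans hl hin) h.symm
          have hval : mid s(x, z) = c s(x, z) := by
            rw [hmid, recolor_ne _ _ _ (hmem (i+1) le_rfl)]
            exact hs3 _ (fun l hl => hmem l (le_trans hl (Nat.le_succ i)))
          rw [hval]
          intro h
          have e2 : c s(x, f (i+1)) = some (βc (f i)) := hfprop i hilt
          exact hez (i+1) le_rfl (huniq h e2)
      have : Proper (recolor mid s(x, f i) (some (βc (f i)))) :=
        proper_color hmid_prop hmid_dom hmissx hmissfi hmid0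
      exact this
  -- missing colors transferred to R i
  have hRmissx : ∀ i, i ≤ n₀ → ∀ γ : Fin (Δ+1), Missing G c x γ → Missing G (R i) x γ := by
    intro i hi γ hγ z hz
    obtain ⟨hs1, hs2, hs3⟩ := hspec i hi
    by_cases hez : ∃ l, l ≤ i ∧ z = f l
    · obtain ⟨l, hl, rfl⟩ := hez
      rcases Nat.lt_or_ge l i with hl' | hl'
      · rw [hs1 l hl']
        intro h
        have hb : βc (f l) = γ := Option.some_injective _ h
        have e1 : c s(x, f (l+1)) = some (βc (f l)) := hfprop l (lt_of_lt_of_le hl' hi)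
        rw [hb] at e1
        exact hγ (f (l+1)) (hfadj (l+1) (Nat.succ_le_of_lt (lt_of_lt_of_le hl' hi))) e1
      · have : l = i := le_antisymm hl hl'
        subst this
        rw [hs2]
        simp
    · push_neg at hez
      have hmem : ∀ l, l ≤ i → (s(x, z) : Sym2 V) ≠ s(x, f l) := by
        intro l hl h
        rw [Sym2.eq_iff] at h
        rcases h with ⟨-, h⟩ | ⟨h, -⟩
        · exact hez l hl h
        · exact hfx l (le_trans hl hi) h.symm
      rw [hs3 _ hmem]
      exact hγ z hz
  have hRmissf : ∀ i, i ≤ n₀ → Missing G (R i) (f i) (βc (f i)) := by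
    intro i hi z hz
    obtain ⟨hs1, hs2, hs3⟩ := hspec i hi
    by_cases hzx : z = x
    · subst hzx
      rw [Sym2.eq_swap, hs2]
      simp
    · have hmem : ∀ l, l ≤ i → (s(f i, z) : Sym2 V) ≠ s(x, f l) := by
        intro l hl h
        have : x ∈ (s(f i, z) : Sym2 V) := by rw [h]; exact Sym2.mem_mk_left x (f l)
        rcases Sym2.mem_iff.1 this with h' | h'
        · exact hfx i hi h'.symm
        · exact hzx h'.symm
      rw [hs3 _ hmem]
      exact hβc (f i) z hz
  -- the main case split
  by_cases hA : Missing G c x (βc (f n₀))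
  · -- Case A : rotate fully and color
    exact fill (hfadj n₀ le_rfl) (hRdom n₀ le_rfl) (hRproper n₀ le_rfl)
      (hRmissx n₀ le_rfl _ hA) (hRmissf n₀ le_rfl)
  · -- Case B
    have hA' : ∃ z, G.Adj x z ∧ c s(x, z) = some (βc (f n₀)) := by
      by_contra hno
      push_neg at hno
      exact hA (fun z hz => hno z hz)
    obtain ⟨z₀, hz₀adj, hz₀⟩ := hA'
    set β : Fin (Δ+1) := βc (f n₀) with hβdef
    obtain ⟨α, hα⟩ : ∃ α, Missing G c x α :=
      exists_missing G c x (lt_of_le_of_lt (hdeg x) (Nat.lt_succ_self Δ))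
    have hab : α ≠ β := by
      intro h
      exact hα z₀ hz₀adj (by rw [h]; exact hz₀)
    -- z₀ is in the fan
    have hz₀y : z₀ ≠ y := by
      intro h
      rw [h, ← hf0] at hz₀
      rw [h0] at hz₀
      exact nomatch hz₀
    obtain ⟨j, hj1, hjn, hjz⟩ : ∃ j, 1 ≤ j ∧ j ≤ n₀ ∧ z₀ = f j := by
      by_contra hcon
      push_neg at hcon
      have hz₀f : ∀ l, l ≤ n₀ → z₀ ≠ f l := by
        intro l hl
        cases Nat.eq_zero_or_pos l with
        | inl h => rw [h, hf0]; exact hz₀y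
        | inr h => exact fun he => (hcon l h hl) he
      -- extend the fan
      have : n₀ + 1 ∈ S := by
        refine ⟨fun l => if l = n₀ + 1 then z₀ else f l, ?_, ?_, ?_, ?_⟩
        · simp [hf0]
        · intro l hl
          by_cases h : l = n₀ + 1
          · simp only [h, if_pos rfl]; exact hz₀adj
          · simp only [if_neg h]
            exact hfadj l (by omega)
        · intro a b ha hb hab'
          by_cases h1 : a = n₀ + 1 <;> by_cases h2 : b = n₀ + 1
          · omega
          · exfalso
            simp only [h1, if_pos rfl, if_neg h2] at hab'
            exact hz₀f b (by omega) hab'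
          · exfalso
            simp only [h2, if_pos rfl, if_neg h1] at hab'
            exact hz₀f a (by omega) hab'.symm
          · simp only [if_neg h1, if_neg h2] at hab'
            exact hfinj a b (by omega) (by omega) hab'
        · intro l hl
          by_cases h : l + 1 = n₀ + 1
          · have hln : l = n₀ := by omega
            subst hln
            simp only [if_pos rfl, if_neg (by omega : ¬ n₀ = n₀ + 1)]
            exact hz₀
          · simp only [if_neg h, if_neg (by omega : ¬ l = n₀ + 1)]
            exact hfprop l (by omega)
      have := le_csSup hSb this
      omega
    subst hjz
    -- β is the chosen missing color of f (j-1)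
    have hjm1 : j - 1 < n₀ := by omega
    have hββ : β = βc (f (j-1)) := by
      have e1 : c s(x, f (j-1+1)) = some (βc (f (j-1))) := hfprop (j-1) hjm1
      rw [(by omega : j - 1 + 1 = j)] at e1
      exact Option.some_injective _ (hz₀.symm.trans e1)
    have hjltn : j < n₀ := by
      rcases Nat.lt_or_ge j n₀ with h | h
      · exact h
      · exfalso
        have hj : j = n₀ := le_antisymm hjn h
        have hz₀' : c s(x, f n₀) = some β := by rw [← hj]; exact hz₀
        have hmm := hβc (f n₀) x (hfadj n₀ le_rfl).symm
        rw [Sym2.eq_swap] at hmm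
        exact hmm hz₀'
    have hxfj : x ≠ f j := (hfx j hjn).symm
    -- a missing-color helper
    have hall : ∀ (c' : Sym2 V → Option (Fin (Δ+1))) (v : V) (γ : Fin (Δ+1)),
        (∀ e, (c' e).isSome → e ∈ G.edgeSet) → Missing G c' v γ →
        ∀ z, c' s(v, z) ≠ some γ := by
      intro c' v γ hd hm z hcz
      have : (s(v, z) : Sym2 V) ∈ G.edgeSet := hd _ (by rw [hcz]; rfl)
      exact hm z ((SimpleGraph.mem_edgeSet _).1 this) hcz
    by_cases hreach : (abG c α β).Reachable x (f (j-1))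
    · -- Case B2 : rotate fully, Kempe-swap
      obtain ⟨hs1, hs2, hs3⟩ := hspec n₀ le_rfl
      have hP2 : Proper (R n₀) := hRproper n₀ le_rfl
      have hdom2 : ∀ e, ((R n₀) e).isSome → e ∈ G.edgeSet := fun e he =>
        ((hRdom n₀ le_rfl e).1 he).1
      have havoid : ∀ a z : V, a ≠ x → z ≠ x → (R n₀) s(a, z) = c s(a, z) := by
        intro a z ha hz
        refine hs3 _ (fun l _ h => ?_)
        have : x ∈ (s(a, z) : Sym2 V) := by rw [h]; exact Sym2.mem_mk_left x (f l)
        rcases Sym2.mem_iff.1 this with h' | h'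
        · exact ha h'.symm
        · exact hz h'.symm
      set H₂ := abG (R n₀) α β with hH₂
      have hdeg2 : ∀ v, (H₂.neighborSet v).ncard ≤ 2 := fun v => abG_deg_le_two hP2 v
      have dx : (H₂.neighborSet x).ncard ≤ 1 :=
        abG_deg_le_one_left hP2 (hall _ x α hdom2 (hRmissx n₀ le_rfl α hα))
      have dfn : (H₂.neighborSet (f n₀)).ncard ≤ 1 := by
        refine abG_deg_le_one hP2 ?_
        intro z
        have hz := hall _ (f n₀) (βc (f n₀)) hdom2 (hRmissf n₀ le_rfl) z
        rwa [← hβdef] at hz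
      have dfj : (H₂.neighborSet (f j)).ncard ≤ 1 := by
        refine abG_deg_le_one hP2 ?_
        intro z
        by_cases hzx : z = x
        · rw [hzx, Sym2.eq_swap, hs1 j hjltn]
          intro h
          have hb : βc (f j) = β := Option.some_injective _ h
          have e1 : c s(x, f (j+1)) = some (βc (f j)) := hfprop j hjltn
          rw [hb] at e1
          have := huniq e1 hz₀
          have := hfinj (j+1) j (Nat.succ_le_of_lt hjltn) hjn this
          omega
        · rw [havoid (f j) z (hfx j hjn) hzx]
          intro h
          have hfjz : f j ≠ z := by
            have : (s(f j, z) : Sym2 V) ∈ G.edgeSet := hdom1 _ (by rw [h]; rfl)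
            exact ((SimpleGraph.mem_edgeSet _).1 this).ne
          have h2 : c s(f j, x) = some β := by rw [Sym2.eq_swap]; exact hz₀
          exact hzx (proper_unique hc h h2 hfjz)
      -- x is reachable to f j in H₂
      have hxnbr : ∀ z, (abG c α β).Adj x z → z = f j := by
        intro z hz
        rcases hz.2 with h | h
        · exact absurd h (hall c x α hdom1 hα z)
        · exact huniq h hz₀
      set D : SimpleGraph V :=
        { Adj := fun u v => (abG c α β).Adj u v ∧ u ≠ x ∧ v ≠ x,
          symm := ⟨fun u v h => ⟨h.1.symm, h.2.2, h.2.1⟩⟩,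
          loopless := ⟨fun u h => (abG c α β).irrefl h.1⟩ } with hD
      have hDle : D ≤ H₂ := by
        intro u v huv
        obtain ⟨⟨hne, hcol⟩, hux, hvx⟩ := huv
        exact ⟨hne, by rw [havoid u v hux hvx]; exact hcol⟩
      have hS : ∀ v, (abG c α β).Reachable x v → v = x ∨ D.Reachable (f j) v := by
        intro v hv
        obtain ⟨W⟩ := hv
        refine reach_closed (H := abG c α β)
          (S := {v | v = x ∨ D.Reachable (f j) v}) ?_ W (Or.inl rfl)
        intro v hv z hzadj
        by_cases hvx : v = x
        · subst hvx
          right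
          rw [hxnbr z hzadj]
        · rcases hv with rfl | hv
          · exact absurd rfl hvx
          · by_cases hzx : z = x
            · exact Or.inl hzx
            · exact Or.inr (hv.trans (SimpleGraph.Adj.reachable ⟨hzadj, hvx, hzx⟩))
        
      have hr2 : H₂.Reachable x (f j) := by
        have hadj1 : H₂.Adj x (f (j-1)) := by
          refine ⟨(hfx (j-1) (by omega)).symm, Or.inr ?_⟩
          rw [hs1 (j-1) hjm1, ← hββ]
        rcases hS (f (j-1)) hreach with h | h
        · exact absurd h (hfx (j-1) (by omega))
        · exact hadj1.reachable.trans (h.mono hDle).symm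
      have hfjfn : f j ≠ f n₀ := fun h =>
        absurd (hfinj j n₀ hjn le_rfl h) (by omega)
      have hxfn : x ≠ f n₀ := (hfx n₀ le_rfl).symm
      have hnr : ¬ H₂.Reachable x (f n₀) :=
        no_three hdeg2 hxfj hxfn hfjfn dx dfj dfn hr2
      refine kempe_extend (hfadj n₀ le_rfl) (hRdom n₀ le_rfl) hP2 hab
        (hRmissx n₀ le_rfl α hα) ?_ hnr
      rw [hβdef]
      exact hRmissf n₀ le_rfl
    · -- Case B1 : rotate to j-1
      have hsub : abG (R (j-1)) α β ≤ abG c α β := by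
        intro u v huv
        obtain ⟨hne, hcol⟩ := huv
        refine ⟨hne, ?_⟩
        obtain ⟨hs1, hs2, hs3⟩ := hspec (j-1) (by omega)
        by_cases hex : ∃ l, l ≤ j-1 ∧ (s(u, v) : Sym2 V) = s(x, f l)
        · obtain ⟨l, hl, heq⟩ := hex
          rw [heq] at hcol
          rcases Nat.lt_or_ge l (j-1) with hl' | hl'
          · rw [hs1 l hl'] at hcol
            exfalso
            have e1 : c s(x, f (l+1)) = some (βc (f l)) := hfprop l (by omega)
            rcases hcol with h | h
            · have hb : βc (f l) = α := Option.some_injective _ h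
              rw [hb] at e1
              exact hα (f (l+1)) (hfadj (l+1) (by omega)) e1
            · have hb : βc (f l) = β := Option.some_injective _ h
              rw [hb] at e1
              have h2 := huniq e1 hz₀
              have := hfinj (l+1) j (by omega) hjn h2
              omega
          · have : l = j-1 := le_antisymm hl hl'
            subst this
            rw [hs2] at hcol
            simp at hcol
        · push_neg at hex
          rwa [hs3 _ (fun l hl h => hex l hl h)] at hcol
      have hnr : ¬ (abG (R (j-1)) α β).Reachable x (f (j-1)) := fun h =>
        hreach (h.mono hsub)
      refine kempe_extend (hfadj (j-1) (by omega)) (hRdom (j-1) (by omega))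
        (hRproper (j-1) (by omega)) hab (hRmissx (j-1) (by omega) α hα) ?_ hnr
      rw [hββ]
      exact hRmissf (j-1) (by omega)

/-! ### Vizing's theorem -/

theorem vizing [Fintype V] (Δ : ℕ) :
    ∀ (G : SimpleGraph V), (∀ v, (G.neighborSet v).ncard ≤ Δ) →
    ∃ c : Sym2 V → Option (Fin (Δ+1)), (∀ e, (c e).isSome ↔ e ∈ G.edgeSet) ∧ Proper c := by
  classical
  suffices H : ∀ (n : ℕ) (G : SimpleGraph V), (∀ v, (G.neighborSet v).ncard ≤ Δ) →
      G.edgeSet.ncard = n →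
      ∃ c : Sym2 V → Option (Fin (Δ+1)), (∀ e, (c e).isSome ↔ e ∈ G.edgeSet) ∧ Proper c by
    exact fun G hdeg => H G.edgeSet.ncard G hdeg rfl
  intro n
  induction n using Nat.strong_induction_on with
  | _ n ih =>
    intro G hdeg hcard
    by_cases h0 : G.edgeSet = ∅
    · refine ⟨fun _ => none, fun e => by simp [h0], ?_⟩
      intro a e f hae haf hef hs
      simp at hs
    · obtain ⟨e₀, he₀⟩ := Set.nonempty_iff_ne_empty.2 h0
      induction e₀ using Sym2.ind with
      | _ x y =>
        set G' := G.deleteEdges {s(x, y)} with hG'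
        have hedge' : G'.edgeSet = G.edgeSet \ {s(x, y)} := SimpleGraph.edgeSet_deleteEdges _
        have hle : G' ≤ G := SimpleGraph.deleteEdges_le _
        have hdeg' : ∀ v, (G'.neighborSet v).ncard ≤ Δ := by
          intro v
          refine le_trans (Set.ncard_le_ncard ?_ (Set.toFinite _)) (hdeg v)
          intro z hz
          exact hle hz
        have hcard' : G'.edgeSet.ncard < n := by
          rw [hedge', ← hcard]
          exact Set.ncard_diff_singleton_lt_of_mem he₀ (Set.toFinite _)
        obtain ⟨c, hcdom, hcprop⟩ := ih _ hcard' G' hdeg' rfl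
        have hdom : ∀ e, (c e).isSome ↔ e ∈ G.edgeSet ∧ e ≠ s(x, y) := by
          intro e
          rw [hcdom e, hedge']
          simp [Set.mem_diff]
        exact vizing_extend hdeg ((SimpleGraph.mem_edgeSet _).1 he₀) hdom hcprop

end Viz

end VizDev

section Assembly
open SimpleGraph

lemma induce_edge_connected {V : Type} {G : SimpleGraph V} {e : Sym2 V} (he : e ∈ G.edgeSet) :
    (G.induce {v | v ∈ e}).Connected := by
  induction e using Sym2.ind with
  | _ a b =>
    have hadj : G.Adj a b := (SimpleGraph.mem_edgeSet _).1 he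
    haveI : Nonempty ({v | v ∈ (s(a, b) : Sym2 V)} : Set V) := ⟨⟨a, Sym2.mem_mk_left a b⟩⟩
    constructor
    rintro ⟨u, hu⟩ ⟨w, hw⟩
    simp only [Set.mem_setOf_eq, Sym2.mem_iff] at hu hw
    rcases hu with rfl | rfl <;> rcases hw with rfl | rfl
    · rfl
    · exact SimpleGraph.Adj.reachable (by exact hadj)
    · exact SimpleGraph.Adj.reachable (by exact hadj.symm)
    · rfl

theorem stmt4 (𝒢 : ∀ V : Type, SimpleGraph V → Prop)
    (hclosed : ∀ (V W : Type) (G : SimpleGraph V) (H : SimpleGraph W),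
      𝒢 V G → IsMinor H G → 𝒢 W H)
    (hproper : ∃ (V : Type) (_ : Fintype V) (G : SimpleGraph V), ¬ 𝒢 V G)
    (r : ℕ)
    (hr : ∀ (V : Type) (G : SimpleGraph V), 𝒢 V G → G.chromaticNumber ≤ (r : ℕ∞))
    {V : Type} [Fintype V] (G : SimpleGraph V) (hG : 𝒢 V G) (Δ : ℕ)
    (hΔ : ∀ v, (G.neighborSet v).ncard ≤ Δ) :
    strongChromaticIndex G ≤ r * (Δ + 1) := by
  classical
  by_cases hr0 : r = 0
  · -- r = 0 : V is empty
    subst hr0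
    have hcol : G.Colorable 0 := by
      have h := hr V G hG
      rw [Nat.cast_zero] at h
      exact (SimpleGraph.chromaticNumber_le_iff_colorable).1 (by exact_mod_cast h)
    haveI hemp : IsEmpty V := ⟨fun v => (hcol.some v).elim0⟩
    haveI : IsEmpty (Sym2 V) := ⟨fun e => Sym2.ind (fun a _ => isEmptyElim a) e⟩
    have hmem : 0 ∈ {n : ℕ | ∃ c : Sym2 V → Fin n, IsStrongEdgeColoring G c} := by
      refine ⟨fun e => isEmptyElim e, ?_⟩
      intro k
      exact k.elim0
    simpa [strongChromaticIndex] using Nat.sInf_le hmem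
  · have hr1 : 1 ≤ r := Nat.one_le_iff_ne_zero.2 hr0
    obtain ⟨c₀, hdom, hprop⟩ := Viz.vizing Δ G hΔ
    set M : Fin (Δ+1) → Set (Sym2 V) := fun i => {e | e ∈ G.edgeSet ∧ c₀ e = some i} with hM
    have hnear_symm : ∀ {e f}, edgeNear G e f → edgeNear G f e := by
      rintro e f ⟨a, ha, b, hb, h⟩
      refine ⟨b, hb, a, ha, ?_⟩
      rcases h with h | h
      · exact Or.inl h.symm
      · exact Or.inr h.symm
    set H : ∀ i : Fin (Δ+1), SimpleGraph {e // e ∈ M i} := fun i =>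
      { Adj := fun e f => e ≠ f ∧ edgeNear G e.1 f.1,
        symm := ⟨fun e f h => ⟨h.1.symm, hnear_symm h.2⟩⟩,
        loopless := ⟨fun e h => h.1 rfl⟩ } with hH
    have hdisj : ∀ (i : Fin (Δ+1)) (e f : Sym2 V), e ∈ M i → f ∈ M i → e ≠ f →
        ∀ a, a ∈ e → a ∉ f := by
      intro i e f he hf hef a hae haf
      exact hprop hae haf hef (by rw [he.2]; rfl) (by rw [he.2, hf.2])
    have hminor : ∀ i, IsMinor (H i) G := by
      intro i
      refine ⟨fun e => {v | v ∈ e.1}, ?_, ?_, ?_, ?_⟩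
      · intro e
        show ({v | v ∈ e.1} : Set V).Nonempty
        exact Sym2.ind (f := fun z => ({v | v ∈ z} : Set V).Nonempty)
          (fun a b => ⟨a, Sym2.mem_mk_left a b⟩) e.1
      · intro e f hef
        rw [Set.disjoint_left]
        intro a hae haf
        exact hdisj i e.1 f.1 e.2 f.2 (fun h => hef (Subtype.ext h)) a hae haf
      · intro e
        exact induce_edge_connected e.2.1
      · rintro e f ⟨hef, a, ha, b, hb, h⟩
        rcases h with h | h
        · exact absurd (by rw [h]; exact hb)
            (hdisj i e.1 f.1 e.2 f.2 (fun hh => hef (Subtype.ext hh)) a ha)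
        · exact ⟨a, ha, b, hb, h⟩
    have hcolor : ∀ i, (H i).Colorable r := by
      intro i
      have hGi := hclosed V {e // e ∈ M i} G (H i) hG (hminor i)
      exact (SimpleGraph.chromaticNumber_le_iff_colorable).1 (hr _ _ hGi)
    set g : ∀ i, (H i).Coloring (Fin r) := fun i => (hcolor i).some with hgdef
    set gg : Fin (Δ+1) → Sym2 V → Fin r := fun i e =>
      if h : e ∈ M i then g i ⟨e, h⟩ else ⟨0, hr1⟩ with hgg
    have hpos : 0 < r * (Δ + 1) := Nat.mul_pos hr1 (Nat.succ_pos Δ)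
    set enc : Fin (Δ+1) × Fin r → Fin (r * (Δ+1)) := fun p =>
      finCongr (by ring) (finProdFinEquiv p) with henc
    have hencinj : Function.Injective enc := by
      intro p q h
      rw [henc] at h
      exact finProdFinEquiv.injective ((finCongr (by ring)).injective h)
    have hsel : ∀ e, e ∈ G.edgeSet → ∃ i, e ∈ M i := by
      intro e h
      have hs := (hdom e).2 h
      exact ⟨(c₀ e).get hs, h, (Option.some_get hs).symm⟩
    choose idx hidx using hsel
    set cF : Sym2 V → Fin (r * (Δ+1)) := fun e =>
      if h : e ∈ G.edgeSet then enc (idx e h, gg (idx e h) e) else ⟨0, hpos⟩ with hcF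
    have hstrong : IsStrongEdgeColoring G cF := by
      intro k
      constructor
      · intro e he
        exact he.1
      · intro e he f hf hef a hae b hbf
        obtain ⟨heE, hek⟩ := he
        obtain ⟨hfE, hfk⟩ := hf
        rw [hcF] at hek hfk
        simp only [dif_pos heE] at hek
        simp only [dif_pos hfE] at hfk
        have hpair := hencinj (hek.trans hfk.symm)
        have h1 : idx e heE = idx f hfE := congrArg Prod.fst hpair
        have h2 : gg (idx e heE) e = gg (idx f hfE) f := congrArg Prod.snd hpair
        rw [← h1] at h2
        have heM : e ∈ M (idx e heE) := hidx e heE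
        have hfM : f ∈ M (idx e heE) := by rw [h1]; exact hidx f hfE
        constructor
        · intro hab
          exact hdisj (idx e heE) e f heM hfM hef a hae (by rw [hab]; exact hbf)
        · intro hadj
          have hHadj : (H (idx e heE)).Adj ⟨e, heM⟩ ⟨f, hfM⟩ :=
            ⟨fun h => hef (congrArg Subtype.val h), ⟨a, hae, b, hbf, Or.inr hadj⟩⟩
          apply (g (idx e heE)).valid hHadj
          have h2' : gg (idx e heE) e = gg (idx e heE) f := h2
          rw [hgg] at h2'
          simp only [dif_pos heM, dif_pos hfM] at h2'
          exact h2'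
    have hmem : r * (Δ + 1) ∈ {n : ℕ | ∃ c : Sym2 V → Fin n, IsStrongEdgeColoring G c} :=
      ⟨cF, hstrong⟩
    exact Nat.sInf_le hmem

end Assembly
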